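/- For every integer s > 13, if a [1,s]-almost intersecting graph F has exactly 2s+2 edges, then F is a copy of the complete bipartite graph K_{2,s+1}: there exist two distinct vertices u, v and a set W of s+1 vertices with W ∩ {u,v} = ∅ such that the edge set of F is exactly { {u,w} : w ∈ W } ∪ { {v,w} : w ∈ W }. -/

import Mathlib

open Finset in
private lemma edge_eq_aux {α : Type*} [DecidableEq α] {F : Finset (Finset α)}
    (huni : ∀ A ∈ F, A.card = 2)
    {A : Finset α} (hA : A ∈ F) {x y : α} (hx : x ∈ A) (hy : y ∈ A) (hxy : x ≠ y) :
    A = {x, y} := by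
  have hsub : ({x, y} : Finset α) ⊆ A := by
    intro z hz; simp only [mem_insert, mem_singleton] at hz
    rcases hz with rfl | rfl <;> assumption
  have h2 : ({x, y} : Finset α).card = 2 := by
    rw [card_insert_of_notMem (by simpa using hxy), card_singleton]
  exact (eq_of_subset_of_card_le hsub (by rw [huni A hA, h2])).symm

open Finset in
private lemma claim1_aux {α : Type*} [DecidableEq α] {s : ℕ} {F : Finset (Finset α)}
    (huni : ∀ A ∈ F, A.card = 2)
    (hai : ∀ A ∈ F, 1 ≤ (F.filter fun B => Disjoint A B).card ∧
      (F.filter fun B => Disjoint A B).card ≤ s)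
    (hcard : F.card = 2 * s + 2)
    {x y : α} (hxy : x ≠ y) (hA : ({x, y} : Finset α) ∈ F) :
    s + 3 ≤ (F.filter fun A => x ∈ A).card + (F.filter fun A => y ∈ A).card := by
  set A : Finset α := {x, y} with hAdef
  have hsplit := card_filter_add_card_filter_not (s := F) (p := fun B => Disjoint A B)
  have hdisj_le := (hai A hA).2
  have hmeet_ge : s + 2 ≤ (F.filter fun B => ¬ Disjoint A B).card := by omega
  have hsub : (F.filter fun B => ¬ Disjoint A B) ⊆
      (F.filter fun B => x ∈ B) ∪ (F.filter fun B => y ∈ B) := by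
    intro B hB
    simp only [mem_filter] at hB
    obtain ⟨a, ha, haB⟩ := not_disjoint_iff.mp hB.2
    simp only [hAdef, mem_insert, mem_singleton] at ha
    simp only [mem_union, mem_filter]
    rcases ha with rfl | rfl
    · exact Or.inl ⟨hB.1, haB⟩
    · exact Or.inr ⟨hB.1, haB⟩
  have hAin : A ∈ (F.filter fun B => x ∈ B) ∩ (F.filter fun B => y ∈ B) := by
    simp [hAdef, hA]
    exact hA
  have hinter : 1 ≤ ((F.filter fun B => x ∈ B) ∩ (F.filter fun B => y ∈ B)).card :=
    card_pos.mpr ⟨A, hAin⟩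
  have hie := card_union_add_card_inter (F.filter fun B => x ∈ B) (F.filter fun B => y ∈ B)
  have hle := card_le_card hsub
  omega

open Finset in
private lemma meets_le_aux {α : Type*} [DecidableEq α] {F : Finset (Finset α)}
    (huni : ∀ A ∈ F, A.card = 2)
    {u : α} {B : Finset α} (hu : u ∉ B) (hB2 : B.card = 2) :
    (F.filter fun C => u ∈ C ∧ ¬ Disjoint B C).card ≤ 2 := by
  have hsub : (F.filter fun C => u ∈ C ∧ ¬ Disjoint B C) ⊆ B.image (fun b => {u, b}) := by
    intro C hC
    simp only [mem_filter] at hC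
    obtain ⟨hCF, huC, hnd⟩ := hC
    obtain ⟨b, hbB, hbC⟩ := not_disjoint_iff.mp hnd
    have hbu : u ≠ b := fun h => hu (h ▸ hbB)
    have : C = {u, b} := edge_eq_aux huni hCF huC hbC hbu
    exact mem_image.mpr ⟨b, hbB, this.symm⟩
  calc (F.filter fun C => u ∈ C ∧ ¬ Disjoint B C).card ≤ (B.image fun b => {u, b}).card :=
        card_le_card hsub
    _ ≤ B.card := card_image_le
    _ = 2 := hB2

open Finset in
private lemma claim2_aux {α : Type*} [DecidableEq α] {s : ℕ} {F : Finset (Finset α)}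
    (huni : ∀ A ∈ F, A.card = 2)
    (hai : ∀ A ∈ F, 1 ≤ (F.filter fun B => Disjoint A B).card ∧
      (F.filter fun B => Disjoint A B).card ≤ s)
    {u v : α} (huv : u ≠ v) {B : Finset α} (hB : B ∈ F) (hu : u ∉ B) (hv : v ∉ B) :
    (F.filter fun A => u ∈ A).card + (F.filter fun A => v ∈ A).card ≤ s + 5 := by
  have hB2 : B.card = 2 := huni B hB
  have hdisj_le := (hai B hB).2
  have hu_split : (F.filter fun A => u ∈ A).card =
      (F.filter fun C => u ∈ C ∧ Disjoint B C).card +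
      (F.filter fun C => u ∈ C ∧ ¬ Disjoint B C).card := by
    have h := card_filter_add_card_filter_not (s := F.filter fun A => u ∈ A)
        (p := fun C => Disjoint B C)
    simp only [filter_filter] at h
    omega
  have hu_meet := meets_le_aux (F := F) huni hu hB2
  have hv_split : (F.filter fun A => v ∈ A).card =
      (F.filter fun C => v ∈ C ∧ u ∈ C).card +
      (F.filter fun C => v ∈ C ∧ u ∉ C).card := by
    have h := card_filter_add_card_filter_not (s := F.filter fun A => v ∈ A)
        (p := fun C => u ∈ C)
    simp only [filter_filter] at h
    omega
  have hvu_le : (F.filter fun C => v ∈ C ∧ u ∈ C).card ≤ 1 := by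
    apply card_le_one.mpr
    intro C hC C' hC'
    simp only [mem_filter] at hC hC'
    rw [edge_eq_aux huni hC.1 hC.2.2 hC.2.1 huv, edge_eq_aux huni hC'.1 hC'.2.2 hC'.2.1 huv]
  have hv2_split : (F.filter fun C => v ∈ C ∧ u ∉ C).card =
      (F.filter fun C => (v ∈ C ∧ u ∉ C) ∧ Disjoint B C).card +
      (F.filter fun C => (v ∈ C ∧ u ∉ C) ∧ ¬ Disjoint B C).card := by
    have h := card_filter_add_card_filter_not (s := F.filter fun C => v ∈ C ∧ u ∉ C)
        (p := fun C => Disjoint B C)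
    simp only [filter_filter] at h
    omega
  have hv_meet : (F.filter fun C => (v ∈ C ∧ u ∉ C) ∧ ¬ Disjoint B C).card ≤ 2 := by
    calc (F.filter fun C => (v ∈ C ∧ u ∉ C) ∧ ¬ Disjoint B C).card
        ≤ (F.filter fun C => v ∈ C ∧ ¬ Disjoint B C).card := by
          apply card_le_card; intro C hC; simp only [mem_filter] at hC ⊢; tauto
      _ ≤ 2 := meets_le_aux huni hv hB2
  have hdisj_sets : Disjoint (F.filter fun C => u ∈ C ∧ Disjoint B C)
      (F.filter fun C => (v ∈ C ∧ u ∉ C) ∧ Disjoint B C) := by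
    rw [disjoint_left]
    intro C h1 h2
    simp only [mem_filter] at h1 h2
    exact h2.2.1.2 h1.2.1
  have hsubU : (F.filter fun C => u ∈ C ∧ Disjoint B C) ∪
      (F.filter fun C => (v ∈ C ∧ u ∉ C) ∧ Disjoint B C) ⊆
      F.filter fun C => Disjoint B C := by
    apply union_subset <;> (intro C hC; simp only [mem_filter] at hC ⊢; tauto)
  have hsum : (F.filter fun C => u ∈ C ∧ Disjoint B C).card +
      (F.filter fun C => (v ∈ C ∧ u ∉ C) ∧ Disjoint B C).card ≤ s := by
    rw [← card_union_of_disjoint hdisj_sets]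
    exact le_trans (card_le_card hsubU) hdisj_le
  omega

open Finset in
private lemma handshake_aux {α : Type*} [DecidableEq α] {F : Finset (Finset α)}
    (huni : ∀ A ∈ F, A.card = 2) :
    ∑ w ∈ F.biUnion id, (F.filter fun A => w ∈ A).card = 2 * F.card := by
  calc ∑ w ∈ F.biUnion id, (F.filter fun A => w ∈ A).card
      = ∑ w ∈ F.biUnion id, ∑ A ∈ F, if w ∈ A then 1 else 0 := by
        apply sum_congr rfl; intro w _; rw [card_filter]
    _ = ∑ A ∈ F, ∑ w ∈ F.biUnion id, if w ∈ A then 1 else 0 := sum_comm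
    _ = ∑ A ∈ F, ((F.biUnion id).filter fun w => w ∈ A).card := by
        apply sum_congr rfl; intro A _; rw [card_filter]
    _ = ∑ A ∈ F, A.card := by
        apply sum_congr rfl; intro A hA
        congr 1
        ext w
        simp only [mem_filter, mem_biUnion, id]
        exact ⟨fun h => h.2, fun h => ⟨⟨A, hA, h⟩, h⟩⟩
    _ = ∑ A ∈ F, 2 := by apply sum_congr rfl; intro A hA; rw [huni A hA]
    _ = 2 * F.card := by rw [sum_const, smul_eq_mul, mul_comm]

open Finset in
private lemma step1_aux {α : Type*} [DecidableEq α] {s : ℕ} {F : Finset (Finset α)}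
    (hs : 13 < s)
    (huni : ∀ A ∈ F, A.card = 2)
    (hai : ∀ A ∈ F, 1 ≤ (F.filter fun B => Disjoint A B).card ∧
      (F.filter fun B => Disjoint A B).card ≤ s)
    (hcard : F.card = 2 * s + 2) :
    ∃ u v : α, u ≠ v ∧ ∀ A ∈ F, u ∈ A ∨ v ∈ A := by
  by_contra hneg
  push_neg at hneg
  have hmemV : ∀ {w : α} {A : Finset α}, A ∈ F → w ∈ A → w ∈ F.biUnion id := by
    intro w A hA hw; exact mem_biUnion.mpr ⟨A, hA, hw⟩
  have hFne : F.Nonempty := card_pos.mp (by omega)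
  obtain ⟨A0, hA0⟩ := hFne
  obtain ⟨x0, y0, hx0y0, hA0eq⟩ := card_eq_two.mp (huni A0 hA0)
  have hVne : (F.biUnion id).Nonempty := ⟨x0, hmemV hA0 (by rw [hA0eq]; simp)⟩
  obtain ⟨u, huV, hmax⟩ :=
    (F.biUnion id).exists_max_image (fun w => (F.filter fun A => w ∈ A).card) hVne
  have hedge_sum : ∀ {A : Finset α}, A ∈ F → ∃ x y, x ≠ y ∧ A = {x, y} ∧
      s + 3 ≤ (F.filter fun B => x ∈ B).card + (F.filter fun B => y ∈ B).card := by
    intro A hA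
    obtain ⟨x, y, hxy, rfl⟩ := card_eq_two.mp (huni A hA)
    exact ⟨x, y, hxy, rfl, claim1_aux huni hai hcard hxy hA⟩
  have hDu_lb : s + 3 ≤ 2 * (F.filter fun A => u ∈ A).card := by
    obtain ⟨x, y, hxy, hEq, hsum⟩ := hedge_sum hA0
    have h1 := hmax x (hmemV hA0 (by rw [hEq]; simp))
    have h2 := hmax y (hmemV hA0 (by rw [hEq]; simp))
    omega
  obtain ⟨B, hBF, huB⟩ : ∃ B ∈ F, u ∉ B := by
    by_cases hu0 : u ∈ A0
    · have h1 := (hai A0 hA0).1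
      obtain ⟨B, hB⟩ := card_pos.mp (by omega : 0 < (F.filter fun B => Disjoint A0 B).card)
      simp only [mem_filter] at hB
      exact ⟨B, hB.1, disjoint_left.mp hB.2 hu0⟩
    · exact ⟨A0, hA0, hu0⟩
  obtain ⟨x, y, hxy, hBeq, hsumB⟩ := hedge_sum hBF
  have hxV := hmemV hBF (show x ∈ B by rw [hBeq]; simp)
  have hyV := hmemV hBF (show y ∈ B by rw [hBeq]; simp)
  have hxu : x ≠ u := by rintro rfl; exact huB (by rw [hBeq]; simp)
  have hyu : y ≠ u := by rintro rfl; exact huB (by rw [hBeq]; simp)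
  obtain ⟨v, hvV, hvu, hDv⟩ : ∃ v, v ∈ F.biUnion id ∧ v ≠ u ∧
      s + 3 ≤ 2 * (F.filter fun A => v ∈ A).card := by
    rcases le_total ((F.filter fun A => x ∈ A).card) ((F.filter fun A => y ∈ A).card) with h | h
    · exact ⟨y, hyV, hyu, by omega⟩
    · exact ⟨x, hxV, hxu, by omega⟩
  have hpair : (F.filter fun A => u ∈ A).card + (F.filter fun A => v ∈ A).card ≤ s + 5 := by
    obtain ⟨B', hB'F, hB'u, hB'v⟩ := hneg u v (Ne.symm hvu)
    exact claim2_aux huni hai (Ne.symm hvu) hB'F hB'u hB'v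
  have hDu_ub : 2 * (F.filter fun A => u ∈ A).card ≤ s + 7 := by
    have := hmax v hvV
    omega
  have hVdeg : ∀ w ∈ F.biUnion id,
      s + 3 ≤ (F.filter fun A => w ∈ A).card + (F.filter fun A => u ∈ A).card := by
    intro w hw
    obtain ⟨A, hA, hwA⟩ := mem_biUnion.mp hw
    simp only [id] at hwA
    obtain ⟨a, b, hab, hEq, hsum⟩ := hedge_sum hA
    have hma := hmax a (hmemV hA (by rw [hEq]; simp))
    have hmb := hmax b (hmemV hA (by rw [hEq]; simp))
    have : w = a ∨ w = b := by rw [hEq] at hwA; simpa using hwA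
    rcases this with rfl | rfl <;> omega
  have hhs : ∑ w ∈ F.biUnion id, (F.filter fun A => w ∈ A).card = 4 * s + 4 := by
    have h := handshake_aux huni
    rw [hcard] at h
    omega
  have e1 : ∑ _w ∈ F.biUnion id, (s + 3) = (F.biUnion id).card * (s + 3) := by
    rw [sum_const, smul_eq_mul]
  have e2 : ∑ w ∈ F.biUnion id,
      ((F.filter fun A => w ∈ A).card + (F.filter fun A => u ∈ A).card) =
      (∑ w ∈ F.biUnion id, (F.filter fun A => w ∈ A).card) +
      (F.biUnion id).card * (F.filter fun A => u ∈ A).card := by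
    rw [sum_add_distrib, sum_const, smul_eq_mul]
  have hsum_lb : (F.biUnion id).card * (s + 3) ≤
      (4 * s + 4) + (F.biUnion id).card * (F.filter fun A => u ∈ A).card := by
    have h1 := sum_le_sum hVdeg
    rw [e1, e2, hhs] at h1
    exact h1
  have hVcard : (F.filter fun A => u ∈ A).card + 1 ≤ (F.biUnion id).card := by
    have hsub : (F.filter fun A => u ∈ A) ⊆
        ((F.biUnion id).erase u).image (fun w => {u, w}) := by
      intro A hA
      simp only [mem_filter] at hA
      obtain ⟨a, b, hab, hEq, _⟩ := hedge_sum hA.1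
      have huab : u = a ∨ u = b := by rw [hEq] at hA; simpa using hA.2
      obtain ⟨w, hwu, hEq2⟩ : ∃ w, w ≠ u ∧ A = {u, w} := by
        rcases huab with rfl | rfl
        · exact ⟨b, hab.symm, hEq⟩
        · exact ⟨a, hab, by rw [hEq, pair_comm]⟩
      have hwV : w ∈ F.biUnion id := hmemV hA.1 (by rw [hEq2]; simp)
      exact mem_image.mpr ⟨w, mem_erase.mpr ⟨hwu, hwV⟩, hEq2.symm⟩
    have h1 : (F.filter fun A => u ∈ A).card ≤ ((F.biUnion id).erase u).card :=
      le_trans (card_le_card hsub) card_image_le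
    rw [card_erase_of_mem huV] at h1
    have h2 : 1 ≤ (F.biUnion id).card := card_pos.mpr hVne
    omega
  set n : ℕ := (F.biUnion id).card
  set a : ℕ := (F.filter fun A => u ∈ A).card
  have f2a : (s:ℤ) + 3 ≤ 2 * (a:ℤ) := by exact_mod_cast hDu_lb
  have f2b : 2 * (a:ℤ) ≤ (s:ℤ) + 7 := by exact_mod_cast hDu_ub
  have f3 : (a:ℤ) + 1 ≤ (n:ℤ) := by exact_mod_cast hVcard
  have f4 : (n:ℤ) * ((s:ℤ) + 3) ≤ 4 * (s:ℤ) + 4 + (n:ℤ) * (a:ℤ) := by exact_mod_cast hsum_lb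
  have f5 : (14:ℤ) ≤ (s:ℤ) := by exact_mod_cast hs
  have g1 : (0:ℤ) ≤ 2 * (n:ℤ) - (s:ℤ) - 5 := by omega
  have g2 : (0:ℤ) ≤ (s:ℤ) + 7 - 2 * (a:ℤ) := by omega
  have hn0 : (0:ℤ) ≤ (n:ℤ) := by positivity
  have hs1 : (0:ℤ) ≤ (s:ℤ) - 1 := by omega
  have hs0 : (0:ℤ) ≤ (s:ℤ) := by positivity
  have hs14 : (0:ℤ) ≤ (s:ℤ) - 14 := by omega
  nlinarith [mul_nonneg hn0 g2, mul_nonneg g1 hs1, mul_nonneg hs0 hs14, f4]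

open Finset in
private lemma cover_key_aux {α : Type*} [DecidableEq α] {F : Finset (Finset α)}
    (huni : ∀ A ∈ F, A.card = 2)
    {u v : α} (huv : u ≠ v) (hcov : ∀ A ∈ F, u ∈ A ∨ v ∈ A)
    (huvF : ({u, v} : Finset α) ∉ F) {w : α} (hw : ({u, w} : Finset α) ∈ F) :
    (({v, w} : Finset α) ∈ F →
      (F.filter fun C => Disjoint ({u, w} : Finset α) C).card + 1 =
        (F.filter fun C => v ∈ C).card) ∧
    (({v, w} : Finset α) ∉ F →
      (F.filter fun C => Disjoint ({u, w} : Finset α) C).card =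
        (F.filter fun C => v ∈ C).card) := by
  have hwv : w ≠ v := by rintro rfl; exact huvF hw
  have hwu : w ≠ u := by
    rintro rfl
    have := huni _ hw
    simp at this
  have heq : F.filter (fun C => Disjoint ({u, w} : Finset α) C) =
      F.filter (fun C => v ∈ C ∧ w ∉ C) := by
    ext C
    simp only [mem_filter, and_congr_right_iff]
    intro hCF
    constructor
    · intro hd
      have hu' : u ∉ C := disjoint_left.mp hd (mem_insert_self u {w})
      have hw' : w ∉ C := disjoint_left.mp hd (by simp)
      exact ⟨(hcov C hCF).resolve_left hu', hw'⟩
    · rintro ⟨hvC, hwC⟩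
      have hu' : u ∉ C := by
        intro huC
        exact huvF ((edge_eq_aux huni hCF huC hvC huv) ▸ hCF)
      rw [disjoint_left]
      intro z hz
      simp only [mem_insert, mem_singleton] at hz
      rcases hz with rfl | rfl
      · exact hu'
      · exact hwC
  have hsplit : (F.filter fun C => v ∈ C).card =
      (F.filter fun C => v ∈ C ∧ w ∈ C).card + (F.filter fun C => v ∈ C ∧ w ∉ C).card := by
    have h := card_filter_add_card_filter_not (s := F.filter fun C => v ∈ C)
      (p := fun C => w ∈ C)
    simp only [filter_filter] at h
    omega
  constructor
  · intro hvwF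
    have hone : (F.filter fun C => v ∈ C ∧ w ∈ C) = {({v, w} : Finset α)} := by
      ext C
      simp only [mem_filter, mem_singleton]
      constructor
      · rintro ⟨hCF, hvC, hwC⟩
        exact edge_eq_aux huni hCF hvC hwC (Ne.symm hwv)
      · rintro rfl
        exact ⟨hvwF, by simp, by simp⟩
    rw [heq, hsplit, hone, card_singleton]
    omega
  · intro hvwF
    have hzero : (F.filter fun C => v ∈ C ∧ w ∈ C) = ∅ := by
      rw [filter_eq_empty_iff]
      rintro C hCF ⟨hvC, hwC⟩
      exact hvwF ((edge_eq_aux huni hCF hvC hwC (Ne.symm hwv)) ▸ hCF)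
    rw [heq, hsplit, hzero, card_empty, Nat.zero_add]

/-- For every `s > 13`, if a `[1,s]`-almost intersecting graph has exactly
`2s+2` edges, then it is a copy of the complete bipartite graph `K_{2,s+1}`. -/
theorem stmt_10 {α : Type*} [DecidableEq α] (s : ℕ) (hs : 13 < s)
    (F : Finset (Finset α))
    (huniform : ∀ A ∈ F, A.card = 2)
    (hai : ∀ A ∈ F, 1 ≤ (F.filter fun B => Disjoint A B).card ∧
      (F.filter fun B => Disjoint A B).card ≤ s)
    (hcard : F.card = 2 * s + 2) :
    ∃ (u v : α) (W : Finset α), u ≠ v ∧ W.card = s + 1 ∧ u ∉ W ∧ v ∉ W ∧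
      F = (W.image fun w => {u, w}) ∪ (W.image fun w => {v, w}) := by
  classical
  open Finset in
  obtain ⟨u, v, huv, hcov⟩ := step1_aux hs huniform hai hcard
  have hcov' : ∀ A ∈ F, v ∈ A ∨ u ∈ A := fun A hA => (hcov A hA).symm
  -- {u, v} is not an edge
  have huvF : ({u, v} : Finset α) ∉ F := by
    intro h
    have h1 := (hai _ h).1
    obtain ⟨B, hB⟩ := Finset.card_pos.mp (by omega : 0 <
      (F.filter fun B => Disjoint ({u, v} : Finset α) B).card)
    simp only [Finset.mem_filter] at hB
    rcases hcov B hB.1 with h' | h'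
    · exact (Finset.disjoint_left.mp hB.2 (by simp)) h'
    · exact (Finset.disjoint_left.mp hB.2 (by simp)) h'
  have hvuF : ({v, u} : Finset α) ∉ F := by rwa [Finset.pair_comm]
  -- F is partitioned into u-edges and v-edges
  have hunion : (F.filter fun A => u ∈ A) ∪ (F.filter fun A => v ∈ A) = F := by
    ext A
    simp only [Finset.mem_union, Finset.mem_filter]
    constructor
    · rintro (⟨h, _⟩ | ⟨h, _⟩) <;> exact h
    · intro hA
      rcases hcov A hA with h | h
      · exact Or.inl ⟨hA, h⟩
      · exact Or.inr ⟨hA, h⟩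
  have hdisjUV : Disjoint (F.filter fun A => u ∈ A) (F.filter fun A => v ∈ A) := by
    rw [Finset.disjoint_left]
    intro A h1 h2
    simp only [Finset.mem_filter] at h1 h2
    exact huvF ((edge_eq_aux huniform h1.1 h1.2 h2.2 huv) ▸ h1.1)
  have hDsum : (F.filter fun A => u ∈ A).card + (F.filter fun A => v ∈ A).card = 2 * s + 2 := by
    rw [← Finset.card_union_of_disjoint hdisjUV, hunion, hcard]
  -- neighborhoods coincide
  have hsub : ∀ w : α, ({u, w} : Finset α) ∈ F → ({v, w} : Finset α) ∈ F := by
    intro w hw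
    by_contra hvw
    have key := (cover_key_aux huniform huv hcov huvF hw).2 hvw
    have h1 := (hai _ hw).1
    have h2 := (hai _ hw).2
    -- D v ≤ s and D v ≥ 1
    have hDv_le : (F.filter fun C => v ∈ C).card ≤ s := by omega
    have hDv_ge : 1 ≤ (F.filter fun C => v ∈ C).card := by omega
    obtain ⟨C, hC⟩ := Finset.card_pos.mp (by omega : 0 < (F.filter fun C => v ∈ C).card)
    simp only [Finset.mem_filter] at hC
    obtain ⟨a, b, hab, hCeq⟩ := Finset.card_eq_two.mp (huniform C hC.1)
    obtain ⟨w', hw'v, hCeq2⟩ : ∃ w', w' ≠ v ∧ C = {v, w'} := by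
      have : v = a ∨ v = b := by rw [hCeq] at hC; simpa using hC.2
      rcases this with rfl | rfl
      · exact ⟨b, fun h => hab h.symm, hCeq⟩
      · exact ⟨a, fun h => hab h, by rw [hCeq, Finset.pair_comm]⟩
    rw [hCeq2] at hC
    have hvw'F : ({v, w'} : Finset α) ∈ F := hC.1
    have key' := cover_key_aux huniform (Ne.symm huv) hcov' hvuF hvw'F
    have hDu_le : (F.filter fun C => u ∈ C).card ≤ s + 1 := by
      by_cases hc : ({u, w'} : Finset α) ∈ F
      · have := key'.1 hc
        have := (hai _ hvw'F).2
        omega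
      · have := key'.2 hc
        have := (hai _ hvw'F).2
        omega
    omega
  have hsub' : ∀ w : α, ({v, w} : Finset α) ∈ F → ({u, w} : Finset α) ∈ F := by
    intro w hw
    by_contra huw
    have key := (cover_key_aux huniform (Ne.symm huv) hcov' hvuF hw).2 huw
    have h1 := (hai _ hw).1
    have h2 := (hai _ hw).2
    obtain ⟨C, hC⟩ := Finset.card_pos.mp (by omega : 0 < (F.filter fun C => u ∈ C).card)
    simp only [Finset.mem_filter] at hC
    obtain ⟨a, b, hab, hCeq⟩ := Finset.card_eq_two.mp (huniform C hC.1)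
    obtain ⟨w', hw'u, hCeq2⟩ : ∃ w', w' ≠ u ∧ C = {u, w'} := by
      have : u = a ∨ u = b := by rw [hCeq] at hC; simpa using hC.2
      rcases this with rfl | rfl
      · exact ⟨b, fun h => hab h.symm, hCeq⟩
      · exact ⟨a, fun h => hab h, by rw [hCeq, Finset.pair_comm]⟩
    rw [hCeq2] at hC
    have huw'F : ({u, w'} : Finset α) ∈ F := hC.1
    have key' := cover_key_aux huniform huv hcov huvF huw'F
    have hDv_le : (F.filter fun C => v ∈ C).card ≤ s + 1 := by
      by_cases hc : ({v, w'} : Finset α) ∈ F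
      · have := key'.1 hc
        have := (hai _ huw'F).2
        omega
      · have := key'.2 hc
        have := (hai _ huw'F).2
        omega
    omega
  -- both degrees equal s + 1
  have himp1 : 1 ≤ (F.filter fun A => u ∈ A).card →
      2 ≤ (F.filter fun A => v ∈ A).card ∧ (F.filter fun A => v ∈ A).card ≤ s + 1 := by
    intro h
    obtain ⟨C, hC⟩ := Finset.card_pos.mp (by omega : 0 < (F.filter fun A => u ∈ A).card)
    simp only [Finset.mem_filter] at hC
    obtain ⟨a, b, hab, hCeq⟩ := Finset.card_eq_two.mp (huniform C hC.1)
    obtain ⟨w, hwu, hCeq2⟩ : ∃ w, w ≠ u ∧ C = {u, w} := by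
      have : u = a ∨ u = b := by rw [hCeq] at hC; simpa using hC.2
      rcases this with rfl | rfl
      · exact ⟨b, fun h => hab h.symm, hCeq⟩
      · exact ⟨a, fun h => hab h, by rw [hCeq, Finset.pair_comm]⟩
    rw [hCeq2] at hC
    have huwF := hC.1
    have hvwF := hsub w huwF
    have key := (cover_key_aux huniform huv hcov huvF huwF).1 hvwF
    have h1 := (hai _ huwF).1
    have h2 := (hai _ huwF).2
    omega
  have himp2 : 1 ≤ (F.filter fun A => v ∈ A).card →
      2 ≤ (F.filter fun A => u ∈ A).card ∧ (F.filter fun A => u ∈ A).card ≤ s + 1 := by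
    intro h
    obtain ⟨C, hC⟩ := Finset.card_pos.mp (by omega : 0 < (F.filter fun A => v ∈ A).card)
    simp only [Finset.mem_filter] at hC
    obtain ⟨a, b, hab, hCeq⟩ := Finset.card_eq_two.mp (huniform C hC.1)
    obtain ⟨w, hwv, hCeq2⟩ : ∃ w, w ≠ v ∧ C = {v, w} := by
      have : v = a ∨ v = b := by rw [hCeq] at hC; simpa using hC.2
      rcases this with rfl | rfl
      · exact ⟨b, fun h => hab h.symm, hCeq⟩
      · exact ⟨a, fun h => hab h, by rw [hCeq, Finset.pair_comm]⟩
    rw [hCeq2] at hC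
    have hvwF := hC.1
    have huwF := hsub' w hvwF
    have key := (cover_key_aux huniform (Ne.symm huv) hcov' hvuF hvwF).1 huwF
    have h1 := (hai _ hvwF).1
    have h2 := (hai _ hvwF).2
    omega
  have hDu : (F.filter fun A => u ∈ A).card = s + 1 := by
    rcases Nat.eq_zero_or_pos (F.filter fun A => u ∈ A).card with h | h
    · have h2 := himp2 (by omega)
      omega
    · have h1 := himp1 h
      have h2 := himp2 (by omega)
      omega
  have hDv : (F.filter fun A => v ∈ A).card = s + 1 := by omega
  -- the set W
  set W : Finset α := (F.filter fun A => u ∈ A).biUnion (fun A => A.erase u) with hW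
  have hWmem : ∀ w : α, w ∈ W ↔ ({u, w} : Finset α) ∈ F := by
    intro w
    constructor
    · intro hwW
      rw [hW] at hwW
      obtain ⟨A, hA, hwA⟩ := Finset.mem_biUnion.mp hwW
      simp only [Finset.mem_filter] at hA
      rw [Finset.mem_erase] at hwA
      exact (edge_eq_aux huniform hA.1 hA.2 hwA.2 (Ne.symm hwA.1)) ▸ hA.1
    · intro hwF
      have hwu : w ≠ u := by
        rintro rfl
        have := huniform _ hwF
        simp at this
      rw [hW]
      apply Finset.mem_biUnion.mpr
      exact ⟨{u, w}, Finset.mem_filter.mpr ⟨hwF, by simp⟩,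
        Finset.mem_erase.mpr ⟨hwu, by simp⟩⟩
  have huW : u ∉ W := by
    intro h
    have := (hWmem u).mp h
    have h2 := huniform _ this
    simp at h2
  have hvW : v ∉ W := by
    intro h
    exact huvF ((hWmem v).mp h)
  have hFu : (F.filter fun A => u ∈ A) = W.image fun w => {u, w} := by
    ext A
    simp only [Finset.mem_filter, Finset.mem_image]
    constructor
    · rintro ⟨hAF, huA⟩
      obtain ⟨a, b, hab, hAeq⟩ := Finset.card_eq_two.mp (huniform A hAF)
      obtain ⟨w, hwu, hAeq2⟩ : ∃ w, w ≠ u ∧ A = {u, w} := by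
        have : u = a ∨ u = b := by rw [hAeq] at huA; simpa using huA
        rcases this with rfl | rfl
        · exact ⟨b, fun h => hab h.symm, hAeq⟩
        · exact ⟨a, fun h => hab h, by rw [hAeq, Finset.pair_comm]⟩
      exact ⟨w, (hWmem w).mpr (hAeq2 ▸ hAF), hAeq2.symm⟩
    · rintro ⟨w, hwW, rfl⟩
      exact ⟨(hWmem w).mp hwW, by simp⟩
  have hFv : (F.filter fun A => v ∈ A) = W.image fun w => {v, w} := by
    ext A
    simp only [Finset.mem_filter, Finset.mem_image]
    constructor
    · rintro ⟨hAF, hvA⟩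
      obtain ⟨a, b, hab, hAeq⟩ := Finset.card_eq_two.mp (huniform A hAF)
      obtain ⟨w, hwv, hAeq2⟩ : ∃ w, w ≠ v ∧ A = {v, w} := by
        have : v = a ∨ v = b := by rw [hAeq] at hvA; simpa using hvA
        rcases this with rfl | rfl
        · exact ⟨b, fun h => hab h.symm, hAeq⟩
        · exact ⟨a, fun h => hab h, by rw [hAeq, Finset.pair_comm]⟩
      have : ({u, w} : Finset α) ∈ F := hsub' w (hAeq2 ▸ hAF)
      exact ⟨w, (hWmem w).mpr this, hAeq2.symm⟩
    · rintro ⟨w, hwW, rfl⟩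
      exact ⟨hsub w ((hWmem w).mp hwW), by simp⟩
  have hWcard : W.card = s + 1 := by
    have hinj : Set.InjOn (fun w => ({u, w} : Finset α)) W := by
      intro a ha b hb hab
      have hau : a ≠ u := fun h => huW (h ▸ ha)
      simp only at hab
      have ha' : a ∈ ({u, b} : Finset α) := hab ▸ (by simp : a ∈ ({u, a} : Finset α))
      simp only [Finset.mem_insert, Finset.mem_singleton] at ha'
      exact ha'.resolve_left hau
    have := Finset.card_image_of_injOn hinj
    rw [← hFu] at this
    omega
  refine ⟨u, v, W, huv, hWcard, huW, hvW, ?_⟩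
  rw [← hFu, ← hFv, hunion]
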